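/- Let u : [0, T+S] × ℝ → ℝ be C^{1,2} with bounded derivatives, let W be a standard Brownian motion, Y_t = u(t, W_t), Z_t = ∂_x u(t, W_t). Then for 0 ≤ t_n < t_{n+1}, E[Y_{t_{n+1}}·(W_{t_{n+1}} - W_{t_n}) | F_{t_n}] = (t_{n+1} - t_n)·E[Z_{t_{n+1}} | F_{t_n}], almost surely. -/

import Mathlib

open MeasureTheory ProbabilityTheory Filter
open scoped NNReal ENNReal

/-- A process `W` is a standard one-dimensional Brownian motion with respect to the
filtration `F`: it starts at `0`, is adapted, has increments independent of the past,
and its increments are centered Gaussian with variance `t - s`. -/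
def IsBrownian {Ω : Type} {m0 : MeasurableSpace Ω} (μ : Measure Ω)
    (F : Filtration ℝ m0) (W : ℝ → Ω → ℝ) : Prop :=
  (∀ᵐ ω ∂μ, W 0 ω = 0) ∧
  Adapted F W ∧
  (∀ s t : ℝ, 0 ≤ s → s ≤ t →
    Indep (MeasurableSpace.comap (fun ω => W t ω - W s ω) (borel ℝ)) (F s) μ) ∧
  (∀ s t : ℝ, 0 ≤ s → s ≤ t →
    Measure.map (fun ω => W t ω - W s ω) μ = gaussianReal 0 (Real.toNNReal (t - s)))

section Aux

open MeasurableSpace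

lemma indep_mono_right {Ω : Type} {m0 : MeasurableSpace Ω} {μ : Measure Ω}
    {m₁ m₂ m₃ : MeasurableSpace Ω} (h : Indep m₁ m₂ μ) (hle : m₃ ≤ m₂) :
    Indep m₁ m₃ μ := by
  rw [Indep_iff] at h ⊢
  exact fun t1 t2 h1 h2 => h t1 t2 h1 (hle _ h2)

/-- Conditional expectation of `φ (X ω) (G ω)` where `X` is `m`-measurable and `G` is
independent of `m`. -/
lemma condexp_indep_aux {Ω : Type} {m m0 : MeasurableSpace Ω} (hm : m ≤ m0)
    (μ : Measure Ω) [IsProbabilityMeasure μ]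
    {X G : Ω → ℝ} (hX : StronglyMeasurable[m] X) (hG : Measurable G)
    (hindep : Indep (MeasurableSpace.comap G (borel ℝ)) m μ)
    {φ : ℝ → ℝ → ℝ} (hφ : Continuous fun p : ℝ × ℝ => φ p.1 p.2)
    {C : ℝ} (hφbd : ∀ x y, |φ x y| ≤ C * (1 + |y|))
    (hmom : Integrable (fun y : ℝ => C * (1 + |y|)) (μ.map G)) :
    (fun ω => ∫ y, φ (X ω) y ∂(μ.map G)) =ᵐ[μ]
      μ[(fun ω => φ (X ω) (G ω))|m] := by
  haveI : IsProbabilityMeasure (μ.map G) := Measure.isProbabilityMeasure_map hG.aemeasurable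
  haveI : SigmaFinite (μ.trim hm) := by
    haveI : IsFiniteMeasure (μ.trim hm) := isFiniteMeasure_trim hm
    infer_instance
  set ν := μ.map G with hν
  have hXm : Measurable[m] X := hX.measurable
  have hX0 : Measurable X := hXm.mono hm le_rfl
  have hφm : Measurable fun p : ℝ × ℝ => φ p.1 p.2 := hφ.measurable
  -- integrability of the original function
  have hGint : Integrable (fun ω => C * (1 + |G ω|)) μ := by
    have h := (integrable_map_measure
      (g := fun y : ℝ => C * (1 + |y|))
      ((continuous_const.mul (continuous_const.add continuous_abs)).aestronglyMeasurable)
      hG.aemeasurable).mp hmom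
    simpa [Function.comp_def] using h
  have hFm : AEStronglyMeasurable (fun ω => φ (X ω) (G ω)) μ :=
    (hφm.comp' (hX0.prodMk hG)).aestronglyMeasurable
  have hFint : Integrable (fun ω => φ (X ω) (G ω)) μ := by
    refine hGint.mono' hFm (Eventually.of_forall fun ω => ?_)
    simpa [Real.norm_eq_abs] using hφbd (X ω) (G ω)
  -- continuity of the integral function
  have hI : Continuous fun x => ∫ y, φ x y ∂ν := by
    refine continuous_of_dominated
      (fun x => (hφ.comp (continuous_const.prodMk continuous_id)).aestronglyMeasurable)
      (fun x => Eventually.of_forall fun y => ?_) hmom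
      (Eventually.of_forall fun y => hφ.comp (continuous_id.prodMk continuous_const))
    simpa [Real.norm_eq_abs] using hφbd x y
  have hgm : StronglyMeasurable[m] (fun ω => ∫ y, φ (X ω) y ∂ν) :=
    hI.comp_stronglyMeasurable hX
  have hK : ∀ ω, ‖∫ y, φ (X ω) y ∂ν‖ ≤ ∫ y, C * (1 + |y|) ∂ν := by
    intro ω
    refine norm_integral_le_of_norm_le hmom (Eventually.of_forall fun y => ?_)
    simpa [Real.norm_eq_abs] using hφbd (X ω) y
  have hgint : Integrable (fun ω => ∫ y, φ (X ω) y ∂ν) μ := by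
    refine (integrable_const (∫ y, C * (1 + |y|) ∂ν)).mono'
      ((hgm.mono hm).aestronglyMeasurable) (Eventually.of_forall hK)
  refine ae_eq_condExp_of_forall_setIntegral_eq hm hFint
    (fun s _ _ => hgint.integrableOn) (fun s hs _ => ?_)
    (hgm.aestronglyMeasurable)
  -- the set-integral identity
  set V' : Ω → ℝ × ℝ := fun ω => (X ω, s.indicator (fun _ => (1:ℝ)) ω) with hV'def
  have hV'meas : Measurable[m] V' := hXm.prodMk (measurable_const.indicator hs)
  have hV'0 : Measurable V' := hV'meas.mono hm le_rfl
  have hVG : IndepFun V' G μ := by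
    have h1 : MeasurableSpace.comap V' inferInstance ≤ m := hV'meas.comap_le
    exact ((indep_mono_right hindep h1).symm : Indep _ _ μ)
  have hmapprod : μ.map (fun ω => (V' ω, G ω)) = (μ.map V').prod ν :=
    (indepFun_iff_map_prod_eq_prod_map_map hV'0.aemeasurable hG.aemeasurable).mp hVG
  set Φ : (ℝ × ℝ) × ℝ → ℝ := fun p => p.1.2 * φ p.1.1 p.2 with hΦdef
  have hΦm : Measurable Φ :=
    (measurable_fst.snd).mul (hφm.comp (measurable_fst.fst.prodMk measurable_snd))
  have hind_int : Integrable (fun v : ℝ × ℝ => |v.2|) (μ.map V') := by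
    rw [integrable_map_measure (g := fun v : ℝ × ℝ => |v.2|)
      (continuous_snd.abs.aestronglyMeasurable) hV'0.aemeasurable]
    refine (integrable_const (1:ℝ)).mono'
      ((measurable_snd.abs.comp hV'0).aestronglyMeasurable)
      (Eventually.of_forall fun ω => ?_)
    simp only [Function.comp_apply, Real.norm_eq_abs, abs_abs]
    by_cases hω : ω ∈ s <;>
      simp [hV'def, Set.indicator_of_mem, Set.indicator_of_notMem, hω]
  have hbound_int : Integrable (fun p : (ℝ × ℝ) × ℝ => |p.1.2| * (C * (1 + |p.2|)))
      ((μ.map V').prod ν) := hind_int.mul_prod hmom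
  have hΦint : Integrable Φ ((μ.map V').prod ν) := by
    refine hbound_int.mono' hΦm.aestronglyMeasurable (Eventually.of_forall fun p => ?_)
    rw [Real.norm_eq_abs]
    calc |Φ p| = |p.1.2| * |φ p.1.1 p.2| := abs_mul _ _
      _ ≤ |p.1.2| * (C * (1 + |p.2|)) :=
        mul_le_mul_of_nonneg_left (hφbd _ _) (abs_nonneg _)
  have e1 : ∫ ω in s, (fun ω => φ (X ω) (G ω)) ω ∂μ = ∫ ω, Φ (V' ω, G ω) ∂μ := by
    rw [← integral_indicator (hm s hs)]
    congr 1; funext ω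
    by_cases hω : ω ∈ s <;>
      simp [hΦdef, hV'def, Set.indicator_of_mem, Set.indicator_of_notMem, hω]
  have e2 : ∫ ω, Φ (V' ω, G ω) ∂μ = ∫ p, Φ p ∂((μ.map V').prod ν) := by
    rw [← hmapprod, integral_map (hV'0.prodMk hG).aemeasurable
      hΦm.aestronglyMeasurable]
  have e3 : ∫ p, Φ p ∂((μ.map V').prod ν) = ∫ v, ∫ y, Φ (v, y) ∂ν ∂(μ.map V') :=
    integral_prod Φ hΦint
  have e4 : ∫ v, ∫ y, Φ (v, y) ∂ν ∂(μ.map V') = ∫ ω, ∫ y, Φ (V' ω, y) ∂ν ∂μ := by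
    rw [integral_map hV'0.aemeasurable]
    exact (hΦm.stronglyMeasurable.integral_prod_right').aestronglyMeasurable
  have e5 : ∀ ω, ∫ y, Φ (V' ω, y) ∂ν
      = s.indicator (fun ω' => ∫ y, φ (X ω') y ∂ν) ω := by
    intro ω
    by_cases hω : ω ∈ s
    · simp [hΦdef, hV'def, Set.indicator_of_mem, hω]
    · simp [hΦdef, hV'def, Set.indicator_of_notMem, hω]
  rw [e1, e2, e3, e4]
  simp_rw [e5]
  rw [integral_indicator (hm s hs)]

/-- Transfer an integral against `gaussianReal 0 V` to a Lebesgue integral. -/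
lemma integral_gaussianReal_eq {V : ℝ≥0} (hV : V ≠ 0) (h : ℝ → ℝ) :
    ∫ y, h y ∂(gaussianReal 0 V) = ∫ y, gaussianPDFReal 0 V y * h y := by
  rw [gaussianReal_of_var_ne_zero 0 hV]
  have hd : gaussianPDF 0 V
      = fun y => ((Real.toNNReal (gaussianPDFReal 0 V y) : ℝ≥0) : ℝ≥0∞) := rfl
  rw [hd, integral_withDensity_eq_integral_smul
    ((measurable_gaussianPDFReal 0 V).real_toNNReal) h]
  congr 1; funext y
  rw [NNReal.smul_def, Real.coe_toNNReal _ (gaussianPDFReal_nonneg 0 V y), smul_eq_mul]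

lemma integrable_gaussianReal_iff {V : ℝ≥0} (hV : V ≠ 0) (h : ℝ → ℝ) :
    Integrable h (gaussianReal 0 V)
      ↔ Integrable (fun y => gaussianPDFReal 0 V y * h y) := by
  rw [gaussianReal_of_var_ne_zero 0 hV]
  have hd : gaussianPDF 0 V
      = fun y => ((Real.toNNReal (gaussianPDFReal 0 V y) : ℝ≥0) : ℝ≥0∞) := rfl
  rw [hd, integrable_withDensity_iff_integrable_smul
    ((measurable_gaussianPDFReal 0 V).real_toNNReal)]
  constructor <;> intro hh <;> refine hh.congr (Eventually.of_forall fun y => ?_) <;>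
    simp [NNReal.smul_def, Real.coe_toNNReal _ (gaussianPDFReal_nonneg 0 V y)]

end Aux

section Gauss

variable {V : ℝ≥0}

lemma gauss_hV0 (hV : V ≠ 0) : (0:ℝ) < (V:ℝ) := by positivity

lemma gaussianPDFReal_eq (V : ℝ≥0) :
    gaussianPDFReal 0 V = fun y => (Real.sqrt (2 * Real.pi * V))⁻¹
      * Real.exp (-(2 * (V:ℝ))⁻¹ * y ^ 2) := by
  funext y
  simp only [gaussianPDFReal, sub_zero]
  congr 1
  ring

lemma continuous_gaussianPDFReal (V : ℝ≥0) : Continuous (gaussianPDFReal 0 V) := by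
  rw [gaussianPDFReal_eq]
  fun_prop

lemma integrable_abs_mul_gaussianPDFReal (hV : V ≠ 0) :
    Integrable (fun y => |y| * gaussianPDFReal 0 V y) := by
  have hb : (0:ℝ) < (2 * (V:ℝ))⁻¹ := by
    have := gauss_hV0 hV; positivity
  have h1 : Integrable (fun y : ℝ =>
      (Real.sqrt (2 * Real.pi * V))⁻¹ * (y * Real.exp (-(2 * (V:ℝ))⁻¹ * y ^ 2))) :=
    (integrable_mul_exp_neg_mul_sq hb).const_mul _
  have h2 : Integrable (fun y : ℝ => y * gaussianPDFReal 0 V y) := by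
    refine h1.congr (Eventually.of_forall fun y => ?_)
    rw [gaussianPDFReal_eq]; ring
  have h3 := h2.abs
  refine h3.congr (Eventually.of_forall fun y => ?_)
  show |y * gaussianPDFReal 0 V y| = |y| * gaussianPDFReal 0 V y
  rw [abs_mul, abs_of_nonneg (gaussianPDFReal_nonneg 0 V y)]

lemma hasDerivAt_gaussianPDFReal (hV : V ≠ 0) (y : ℝ) :
    HasDerivAt (gaussianPDFReal 0 V)
      (-(y / (V:ℝ)) * gaussianPDFReal 0 V y) y := by
  have hV0 : (0:ℝ) < (V:ℝ) := gauss_hV0 hV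
  set c : ℝ := (Real.sqrt (2 * Real.pi * V))⁻¹
  set b : ℝ := (2 * (V:ℝ))⁻¹
  have h1 : HasDerivAt (fun y : ℝ => -b * y ^ 2) (-b * (2 * y)) y := by
    simpa using (hasDerivAt_pow 2 y).const_mul (-b)
  have h2 : HasDerivAt (fun y : ℝ => Real.exp (-b * y ^ 2))
      (Real.exp (-b * y ^ 2) * (-b * (2 * y))) y := h1.exp
  have h3 := h2.const_mul c
  rw [gaussianPDFReal_eq]
  refine h3.congr_deriv (Eq.symm ?_)
  show -(y / (V:ℝ)) * (c * Real.exp (-b * y ^ 2)) = c * (Real.exp (-b * y ^ 2) * (-b * (2 * y)))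
  have hb : b = (2 * (V:ℝ))⁻¹ := rfl
  field_simp [hb]
  rw [hb]; field_simp

/-- Gaussian integration by parts. -/
lemma gaussian_ibp (hV : V ≠ 0) {f : ℝ → ℝ} (hfd : Differentiable ℝ f)
    (hf'c : Continuous (deriv f)) {C : ℝ}
    (hbf : ∀ x, |f x| ≤ C) (hbf' : ∀ x, |deriv f x| ≤ C) (x : ℝ) :
    ∫ y, f (x + y) * y ∂(gaussianReal 0 V)
      = (V:ℝ) * ∫ y, deriv f (x + y) ∂(gaussianReal 0 V) := by
  have hV0 : (0:ℝ) < (V:ℝ) := gauss_hV0 hV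
  set p : ℝ → ℝ := gaussianPDFReal 0 V with hp
  have hpc : Continuous p := continuous_gaussianPDFReal V
  have hpnn : ∀ y, 0 ≤ p y := gaussianPDFReal_nonneg 0 V
  have hpint : Integrable p := integrable_gaussianPDFReal 0 V
  have hypint : Integrable (fun y => |y| * p y) := integrable_abs_mul_gaussianPDFReal hV
  have hC : 0 ≤ C := le_trans (abs_nonneg _) (hbf 0)
  -- integrability of the two pieces
  have hA : Integrable (fun y => deriv f (x + y) * p y) := by
    refine (hpint.const_mul C).mono'
      (((hf'c.comp (continuous_const.add continuous_id)).mul hpc).aestronglyMeasurable)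
      (Eventually.of_forall fun y => ?_)
    rw [Real.norm_eq_abs, abs_mul, abs_of_nonneg (hpnn y)]
    exact mul_le_mul_of_nonneg_right (hbf' _) (hpnn y)
  have hB : Integrable (fun y => f (x + y) * (-(y / (V:ℝ)) * p y)) := by
    refine ((hypint.const_mul (C / V)).mono'
      (((hfd.continuous.comp (continuous_const.add continuous_id)).mul
        ((continuous_id.div_const _).neg.mul hpc)).aestronglyMeasurable)
      (Eventually.of_forall fun y => ?_))
    rw [Real.norm_eq_abs, abs_mul, abs_mul, abs_neg, abs_div,
      abs_of_nonneg (hpnn y), abs_of_nonneg hV0.le]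
    calc |f (x + y)| * (|y| / (V:ℝ) * p y)
        ≤ C * (|y| / (V:ℝ) * p y) := by
          refine mul_le_mul_of_nonneg_right (hbf _) ?_
          exact mul_nonneg (by positivity) (hpnn y)
      _ = C / (V:ℝ) * (|y| * p y) := by ring
  have hgint : Integrable (fun y => f (x + y) * p y) := by
    refine (hpint.const_mul C).mono'
      (((hfd.continuous.comp (continuous_const.add continuous_id)).mul hpc).aestronglyMeasurable)
      (Eventually.of_forall fun y => ?_)
    rw [Real.norm_eq_abs, abs_mul, abs_of_nonneg (hpnn y)]
    exact mul_le_mul_of_nonneg_right (hbf _) (hpnn y)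
  -- the derivative of y ↦ f (x+y) p y
  have hg' : ∀ y, HasDerivAt (fun y => f (x + y) * p y)
      (deriv f (x + y) * p y + f (x + y) * (-(y / (V:ℝ)) * p y)) y := by
    intro y
    have hf1 : HasDerivAt (fun y => f (x + y)) (deriv f (x + y)) y := by
      have h2 := ((hfd (x + y)).hasDerivAt).comp y ((hasDerivAt_id y).const_add x)
      simpa [Function.comp_def] using h2
    exact hf1.mul (hasDerivAt_gaussianPDFReal hV y)
  have hzero : ∫ y, (deriv f (x + y) * p y + f (x + y) * (-(y / (V:ℝ)) * p y)) = 0 :=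
    integral_eq_zero_of_hasDerivAt_of_integrable hg' (hA.add hB) hgint
  rw [integral_add hA hB] at hzero
  have hBint : ∫ y, f (x + y) * (-(y / (V:ℝ)) * p y)
      = -((V:ℝ)⁻¹ * ∫ y, p y * (f (x + y) * y)) := by
    rw [← integral_const_mul, ← integral_neg]
    congr 1; funext y
    rw [div_eq_mul_inv]; ring
  rw [hBint] at hzero
  have key : ∫ y, deriv f (x + y) * p y = (V:ℝ)⁻¹ * ∫ y, p y * (f (x + y) * y) := by
    linarith
  rw [integral_gaussianReal_eq hV, integral_gaussianReal_eq hV]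
  have hcomm : ∫ y, p y * deriv f (x + y) = ∫ y, deriv f (x + y) * p y := by
    congr 1; funext y; ring
  rw [hcomm, key]
  field_simp
  rfl

lemma gaussian_mom (hV : V ≠ 0) (C : ℝ) :
    Integrable (fun y : ℝ => C * (1 + |y|)) (gaussianReal 0 V) := by
  rw [integrable_gaussianReal_iff hV]
  have h1 : Integrable (fun y => gaussianPDFReal 0 V y + |y| * gaussianPDFReal 0 V y) :=
    (integrable_gaussianPDFReal 0 V).add (integrable_abs_mul_gaussianPDFReal hV)
  refine (h1.const_mul C).congr (Eventually.of_forall fun y => ?_)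
  ring

end Gauss

/-- Gaussian integration-by-parts identity:
`E[Y_{t_{n+1}} ΔW | F_{t_n}] = Δt E[Z_{t_{n+1}} | F_{t_n}]` where
`Y_t = u(t, W_t)` and `Z_t = ∂ₓu(t, W_t)`. -/
theorem condexp_mul_increment_eq {Ω : Type} {m0 : MeasurableSpace Ω}
    (μ : Measure Ω) [IsProbabilityMeasure μ] (F : Filtration ℝ m0) (W : ℝ → Ω → ℝ)
    (hW : IsBrownian μ F W) (T S : ℝ) (hTS : 0 < T) (hS : 0 ≤ S)
    (u : ℝ → ℝ → ℝ)
    (hu : ∀ t ∈ Set.Icc 0 (T + S), ContDiff ℝ 2 (u t))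
    (hucont : Continuous fun p : ℝ × ℝ => u p.1 p.2)
    (C₀ : ℝ)
    (hbd : ∀ t ∈ Set.Icc 0 (T + S), ∀ x : ℝ,
      |u t x| ≤ C₀ ∧ |deriv (u t) x| ≤ C₀ ∧ |deriv (deriv (u t)) x| ≤ C₀)
    (tn tn1 : ℝ) (h0 : 0 ≤ tn) (h : tn < tn1) (h1 : tn1 ≤ T + S) :
    (condExp (F tn) μ
        (fun ω => u tn1 (W tn1 ω) * (W tn1 ω - W tn ω)))
      =ᵐ[μ]
    (fun ω => (tn1 - tn) *
        condExp (F tn) μ (fun ω' => deriv (u tn1) (W tn1 ω')) ω) := by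
  obtain ⟨hW0, hWadapted, hWindep, hWlaw⟩ := hW
  have htn1mem : tn1 ∈ Set.Icc 0 (T + S) := ⟨le_trans h0 h.le, h1⟩
  have hf : ContDiff ℝ 2 (u tn1) := hu tn1 htn1mem
  have hfd : Differentiable ℝ (u tn1) := hf.differentiable (by norm_num)
  have hf'c : Continuous (deriv (u tn1)) := hf.continuous_deriv one_le_two
  have hC0 : 0 ≤ C₀ := le_trans (abs_nonneg _) (hbd tn1 htn1mem 0).1
  set V : ℝ≥0 := Real.toNNReal (tn1 - tn) with hVdef
  have hV : V ≠ 0 := by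
    simp only [hVdef, ne_eq, Real.toNNReal_eq_zero, not_le]
    linarith
  have hVcoe : ((V:ℝ)) = tn1 - tn := Real.coe_toNNReal _ (by linarith)
  set G : Ω → ℝ := fun ω => W tn1 ω - W tn ω with hGdef
  have hGmeas : Measurable G :=
    ((hWadapted tn1).mono (F.le tn1) le_rfl).sub
      ((hWadapted tn).mono (F.le tn) le_rfl)
  have hmap : μ.map G = gaussianReal 0 V := hWlaw tn tn1 h0 h.le
  have hindep : Indep (MeasurableSpace.comap G (borel ℝ)) (F tn) μ :=
    hWindep tn tn1 h0 h.le
  have hX : StronglyMeasurable[F tn] (W tn) := (hWadapted tn).stronglyMeasurable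
  have hmom : Integrable (fun y : ℝ => C₀ * (1 + |y|)) (μ.map G) := by
    rw [hmap]; exact gaussian_mom hV C₀
  -- bounds
  have hbf : ∀ x, |u tn1 x| ≤ C₀ := fun x => (hbd tn1 htn1mem x).1
  have hbf' : ∀ x, |deriv (u tn1) x| ≤ C₀ := fun x => (hbd tn1 htn1mem x).2.1
  -- apply the factorization lemma to φ₁
  have hφ1cont : Continuous fun p : ℝ × ℝ => u tn1 (p.1 + p.2) * p.2 :=
    ((hfd.continuous.comp (continuous_fst.add continuous_snd)).mul continuous_snd)
  have hφ1bd : ∀ x y : ℝ, |u tn1 (x + y) * y| ≤ C₀ * (1 + |y|) := by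
    intro x y
    rw [abs_mul]
    calc |u tn1 (x + y)| * |y| ≤ C₀ * |y| :=
          mul_le_mul_of_nonneg_right (hbf _) (abs_nonneg _)
      _ ≤ C₀ * (1 + |y|) := by
          refine mul_le_mul_of_nonneg_left ?_ hC0
          linarith [abs_nonneg y]
  have h1' := condexp_indep_aux (F.le tn) μ hX hGmeas hindep hφ1cont hφ1bd hmom
  -- apply to φ₂
  have hφ2cont : Continuous fun p : ℝ × ℝ => deriv (u tn1) (p.1 + p.2) :=
    hf'c.comp (continuous_fst.add continuous_snd)
  have hφ2bd : ∀ x y : ℝ, |deriv (u tn1) (x + y)| ≤ C₀ * (1 + |y|) := by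
    intro x y
    calc |deriv (u tn1) (x + y)| ≤ C₀ := hbf' _
      _ ≤ C₀ * (1 + |y|) := by nlinarith [abs_nonneg y]
  have h2' := condexp_indep_aux (F.le tn) μ hX hGmeas hindep hφ2cont hφ2bd hmom
  -- rewrite the integrands
  have heq1 : (fun ω => u tn1 (W tn ω + G ω) * G ω)
      = fun ω => u tn1 (W tn1 ω) * (W tn1 ω - W tn ω) := by
    funext ω
    simp only [hGdef, add_sub_cancel]
  have heq2 : (fun ω => deriv (u tn1) (W tn ω + G ω))
      = fun ω => deriv (u tn1) (W tn1 ω) := by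
    funext ω
    simp only [hGdef, add_sub_cancel]
  rw [heq1] at h1'
  rw [heq2] at h2'
  -- integration by parts pointwise
  have hibp : ∀ x : ℝ, ∫ y, u tn1 (x + y) * y ∂(μ.map G)
      = (tn1 - tn) * ∫ y, deriv (u tn1) (x + y) ∂(μ.map G) := by
    intro x
    rw [hmap, ← hVcoe]
    exact gaussian_ibp hV hfd hf'c hbf hbf' x
  refine h1'.symm.trans ?_
  have step : (fun ω => ∫ y, u tn1 (W tn ω + y) * y ∂(μ.map G))
      =ᵐ[μ] fun ω => (tn1 - tn) * condExp (F tn) μ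
        (fun ω' => deriv (u tn1) (W tn1 ω')) ω := by
    filter_upwards [h2'] with ω hω
    rw [hibp (W tn ω), ← hω]
  exact step
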